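/- The function η(ζ) = 1 − ζ⁻⁴ does not admit a holomorphic square root on any punctured disc {0 < |ζ − 1| < r} (r < 1) centered at 1 (and likewise at −1, i, −i), but it does admit a holomorphic square root on the punctured unit disc {0 < |ζ| < 1}. (Henneberg surface example.) -/

import Mathlib

open Complex Filter Function Topology

/-- Henneberg example: `η(ζ) = 1 − ζ⁻⁴` has no holomorphic square root on any
punctured disc `{0 < |ζ − a| < r}` with `r < 1` centered at `a ∈ {1, −1, i, −i}`,
but it does have a holomorphic square root on the punctured unit disc
`{0 < |ζ| < 1}`. -/
theorem stmt16 :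
    (∀ a : ℂ, a ∈ ({1, -1, Complex.I, -Complex.I} : Set ℂ) →
      ∀ r : ℝ, 0 < r → r < 1 →
        ¬∃ h : ℂ → ℂ,
          DifferentiableOn ℂ h {ζ : ℂ | 0 < ‖ζ - a‖ ∧ ‖ζ - a‖ < r} ∧
          ∀ ζ ∈ {ζ : ℂ | 0 < ‖ζ - a‖ ∧ ‖ζ - a‖ < r},
            h ζ ^ 2 = 1 - (ζ ^ 4)⁻¹) ∧
    (∃ h : ℂ → ℂ,
      DifferentiableOn ℂ h {ζ : ℂ | 0 < ‖ζ‖ ∧ ‖ζ‖ < 1} ∧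
      ∀ ζ ∈ {ζ : ℂ | 0 < ‖ζ‖ ∧ ‖ζ‖ < 1},
        h ζ ^ 2 = 1 - (ζ ^ 4)⁻¹) := by
  constructor
  · -- no square root near fourth roots of unity
    rintro a ha r hr hr1 ⟨h, hd, hsq⟩
    have ha4 : a ^ 4 = 1 := by
      rcases ha with rfl | rfl | rfl | rfl <;> simp [pow_succ, Complex.I_mul_I]
    have habs : ‖a‖ = 1 := by
      rcases ha with rfl | rfl | rfl | rfl <;> simp
    have ha0 : a ≠ 0 := by
      intro h0; rw [h0] at ha4; simp at ha4
    set f : ℂ → ℂ := fun ζ => 1 - (ζ ^ 4)⁻¹ with hf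
    set S := {ζ : ℂ | 0 < ‖ζ - a‖ ∧ ‖ζ - a‖ < r} with hS
    have hSeq : S = Metric.ball a r \ {a} := by
      ext ζ
      simp [hS, Metric.mem_ball, Complex.dist_eq, norm_pos_iff, sub_ne_zero, and_comm]
    have hSopen : IsOpen S := by
      rw [hSeq]; exact Metric.isOpen_ball.sdiff isClosed_singleton
    -- derivative of f
    have hfe : f = fun z : ℂ => 1 - z ^ (-4 : ℤ) := by
      funext z; simp [hf, zpow_neg]
    have key : ∀ ζ : ℂ, ζ ≠ 0 → HasDerivAt f (4 * ζ ^ (-5 : ℤ)) ζ := by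
      intro ζ hζ
      have h1 : HasDerivAt (fun z : ℂ => z ^ (-4 : ℤ))
          (((-4 : ℤ) : ℂ) * ζ ^ ((-4 : ℤ) - 1)) ζ := hasDerivAt_zpow (-4) ζ (Or.inl hζ)
      have h2 := (hasDerivAt_const ζ (1 : ℂ)).sub h1
      rw [hfe]
      rw [show (4 : ℂ) * ζ ^ (-5 : ℤ) = 0 - ((-4 : ℤ) : ℂ) * ζ ^ ((-4 : ℤ) - 1) by norm_num]
      exact h2
    -- f tends to 0 at a
    have hfa : f a = 0 := by simp [hf, ha4]
    have hft : Tendsto f (𝓝[≠] a) (𝓝 0) := by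
      have := (key a ha0).continuousAt
      rw [ContinuousAt, hfa] at this
      exact this.mono_left nhdsWithin_le_nhds
    have hSmem : S ∈ 𝓝[≠] a := by
      rw [hSeq]
      exact Filter.inter_mem
        (mem_nhdsWithin_of_mem_nhds (Metric.ball_mem_nhds a hr)) self_mem_nhdsWithin
    -- h tends to 0 at a
    have hht : Tendsto h (𝓝[≠] a) (𝓝 0) := by
      rw [tendsto_zero_iff_norm_tendsto_zero]
      have h1 : Tendsto (fun ζ => Real.sqrt ‖f ζ‖) (𝓝[≠] a) (𝓝 0) := by
        have hn : Tendsto (fun x => ‖f x‖) (𝓝[≠] a) (𝓝 0) := by simpa using hft.norm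
        have := (Real.continuous_sqrt.tendsto 0).comp hn
        simpa [Function.comp_def] using this
      refine h1.congr' ?_
      filter_upwards [hSmem] with ζ hζ
      have hnn : ‖h ζ‖ ^ 2 = ‖f ζ‖ := by rw [← norm_pow, hsq ζ hζ]
      rw [← hnn, Real.sqrt_sq (norm_nonneg _)]
    set H : ℂ → ℂ := Function.update h a 0 with hH
    have hHd : ∀ᶠ z in 𝓝[≠] a, DifferentiableAt ℂ H z := by
      filter_upwards [hSmem, self_mem_nhdsWithin] with z hz hza
      have hza' : z ≠ a := by simpa using hza
      have hdz : DifferentiableAt ℂ h z := (hd z hz).differentiableAt (hSopen.mem_nhds hz)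
      refine hdz.congr_of_eventuallyEq ?_
      filter_upwards [isOpen_compl_singleton.mem_nhds
        (by simpa using hza' : z ∈ ({a}ᶜ : Set ℂ))] with w hw
      exact Function.update_of_ne (by simpa using hw) 0 h
    have hHc : ContinuousAt H a := continuousAt_update_same.2 hht
    have hHdiff : DifferentiableAt ℂ H a :=
      (Complex.analyticAt_of_differentiable_on_punctured_nhds_of_continuousAt
        hHd hHc).differentiableAt
    have hHa0 : H a = 0 := Function.update_self a 0 h
    -- eventual equality of H^2 and f near a
    have heq : (fun ζ => H ζ ^ 2) =ᶠ[𝓝 a] f := by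
      filter_upwards [Metric.ball_mem_nhds a hr] with ζ hζ
      by_cases hza : ζ = a
      · subst hza; rw [hHa0, hfa]; ring
      · have hζS : ζ ∈ S := by
          rw [hSeq]; exact ⟨hζ, by simpa using hza⟩
        have : H ζ = h ζ := Function.update_of_ne hza 0 h
        rw [this]; exact hsq ζ hζS
    have hde : deriv (fun ζ => H ζ ^ 2) a = deriv f a := heq.deriv_eq
    have d1 : deriv (fun ζ => H ζ ^ 2) a = 0 := by
      have := (hHdiff.hasDerivAt.pow 2).deriv
      rw [show (fun ζ => H ζ ^ 2) = H ^ 2 from rfl, this, hHa0]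
      ring
    have d2 : deriv f a = 4 * a ^ (-5 : ℤ) := (key a ha0).deriv
    rw [d1, d2] at hde
    have : a ^ (-5 : ℤ) ≠ 0 := zpow_ne_zero _ ha0
    have h4 : (4 : ℂ) ≠ 0 := by norm_num
    exact (mul_ne_zero h4 this) hde.symm
  · -- square root on the punctured unit disc
    refine ⟨fun ζ => Complex.I * (1 - ζ ^ 4) ^ ((1 : ℂ) / 2) / ζ ^ 2, ?_, ?_⟩
    · intro ζ hζ
      obtain ⟨hζ0, hζ1⟩ := hζ
      have hζne : ζ ≠ 0 := by
        intro h0; rw [h0] at hζ0; simp at hζ0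
      have habs4 : ‖ζ ^ 4‖ < 1 := by
        rw [norm_pow]; exact pow_lt_one₀ (norm_nonneg ζ) hζ1 (by norm_num)
      have hre : 0 < (1 - ζ ^ 4).re := by
        have := Complex.re_le_norm (ζ ^ 4)
        simp only [Complex.sub_re, Complex.one_re]
        linarith
      have hslit : (1 - ζ ^ 4) ∈ Complex.slitPlane := Or.inl hre
      apply DifferentiableAt.differentiableWithinAt
      have hbase : DifferentiableAt ℂ (fun ζ : ℂ => 1 - ζ ^ 4) ζ :=
        (differentiableAt_const 1).sub (differentiableAt_pow 4)
      have hcpow : DifferentiableAt ℂ (fun ζ : ℂ => (1 - ζ ^ 4) ^ ((1 : ℂ) / 2)) ζ :=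
        hbase.cpow (differentiableAt_const _) hslit
      exact ((differentiableAt_const Complex.I).mul hcpow).div (differentiableAt_pow 2)
        (pow_ne_zero 2 hζne)
    · intro ζ hζ
      obtain ⟨hζ0, hζ1⟩ := hζ
      have hζne : ζ ≠ 0 := by
        intro h0; rw [h0] at hζ0; simp at hζ0
      have habs4 : ‖ζ ^ 4‖ < 1 := by
        rw [norm_pow]; exact pow_lt_one₀ (norm_nonneg ζ) hζ1 (by norm_num)
      have hz4 : (1 : ℂ) - ζ ^ 4 ≠ 0 := by
        intro h0
        have : ζ ^ 4 = 1 := by linear_combination -h0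
        rw [this] at habs4; simp at habs4
      have hsq : ((1 - ζ ^ 4) ^ ((1 : ℂ) / 2)) ^ 2 = 1 - ζ ^ 4 := by
        rw [sq, ← Complex.cpow_add _ _ hz4]
        norm_num
      rw [div_pow, mul_pow, hsq, Complex.I_sq]
      have h4 : ζ ^ 4 ≠ 0 := pow_ne_zero 4 hζne
      field_simp
      ring_nf
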